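/- Let Δ ≥ 1 and let G be a finite Δ-regular simple graph. Consider the MIS encoding with label alphabet {M, P, O}, node constraint consisting of the two multisets of size Δ {M repeated Δ} and {P once, O repeated Δ−1}, and edge constraint consisting exactly of the unordered pairs {M,P}, {M,O}, {O,O}. Then: (i) for every valid labeling of G for this encoding, the set S of vertices whose incident labels are all M is a maximal independent set of G, i.e., S is an independent set and every vertex not in S has a neighbor in S; (ii) conversely, for every maximal independent set S of G there exists a valid labeling for this encoding in which the vertices whose incident labels are all M are exactly the vertices of S. -/

import Mathlib

/-- The label alphabet of the MIS encoding. -/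
inductive Lab3 : Type
  | M | P | O
  deriving DecidableEq

instance : Fintype Lab3 where
  elems := {Lab3.M, Lab3.P, Lab3.O}
  complete := by intro x; cases x <;> simp

/-- Node constraint of the MIS encoding: `M^Δ` and `P O^(Δ−1)`. -/
def nodeMIS (Δ : ℕ) (m : Multiset Lab3) : Prop :=
  m = Multiset.replicate Δ Lab3.M ∨
  m = Lab3.P ::ₘ Multiset.replicate (Δ - 1) Lab3.O

/-- Edge constraint of the MIS encoding: exactly the pairs `{M,P}`, `{M,O}`, `{O,O}`. -/
def edgeMIS (l₁ l₂ : Lab3) : Prop :=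
  (l₁ = Lab3.M ∧ (l₂ = Lab3.P ∨ l₂ = Lab3.O)) ∨
  ((l₁ = Lab3.P ∨ l₁ = Lab3.O) ∧ l₂ = Lab3.M) ∨
  (l₁ = Lab3.O ∧ l₂ = Lab3.O)

/-- A valid labeling for the MIS encoding: `ℓ u v` is the label that `u` assigns to
the edge `{u,v}`. -/
def validMIS {V : Type*} [Fintype V] (G : SimpleGraph V) [DecidableRel G.Adj]
    (Δ : ℕ) (ℓ : V → V → Lab3) : Prop :=
  (∀ v : V, nodeMIS Δ ((G.neighborFinset v).val.map (ℓ v))) ∧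
  (∀ u v : V, G.Adj u v → edgeMIS (ℓ u v) (ℓ v u))

/-- (i) For any valid labeling of the MIS encoding on a `Δ`-regular graph,
the set of vertices whose incident labels are all `M` is a maximal independent set;
(ii) conversely, any maximal independent set arises this way from some valid labeling. -/
theorem stmt_11 {V : Type*} [Fintype V] (G : SimpleGraph V) [DecidableRel G.Adj]
    (Δ : ℕ) (hΔ : 1 ≤ Δ) (hreg : G.IsRegularOfDegree Δ) :
    (∀ ℓ : V → V → Lab3, validMIS G Δ ℓ →
      (∀ u ∈ {v : V | ∀ w, G.Adj v w → ℓ v w = Lab3.M},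
       ∀ u' ∈ {v : V | ∀ w, G.Adj v w → ℓ v w = Lab3.M}, ¬ G.Adj u u') ∧
      (∀ v, v ∉ {v : V | ∀ w, G.Adj v w → ℓ v w = Lab3.M} →
        ∃ u ∈ {v : V | ∀ w, G.Adj v w → ℓ v w = Lab3.M}, G.Adj v u)) ∧
    (∀ S : Set V,
      (∀ u ∈ S, ∀ u' ∈ S, ¬ G.Adj u u') →
      (∀ v, v ∉ S → ∃ u ∈ S, G.Adj v u) →
      ∃ ℓ : V → V → Lab3, validMIS G Δ ℓ ∧
        {v : V | ∀ w, G.Adj v w → ℓ v w = Lab3.M} = S) := by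
  classical
  constructor
  · rintro ℓ ⟨hnode, hedge⟩
    -- key: all-M characterization
    have keyM : ∀ v : V, ((G.neighborFinset v).val.map (ℓ v)) =
        Multiset.replicate Δ Lab3.M → ∀ w, G.Adj v w → ℓ v w = Lab3.M := by
      intro v hv w hw
      have hmem : ℓ v w ∈ (G.neighborFinset v).val.map (ℓ v) :=
        Multiset.mem_map_of_mem _ (by simpa [SimpleGraph.mem_neighborFinset] using hw)
      rw [hv] at hmem
      exact (Multiset.eq_of_mem_replicate hmem)
    constructor
    · intro u hu u' hu' hadj
      have h1 : ℓ u u' = Lab3.M := hu u' hadj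
      have h2 : ℓ u' u = Lab3.M := hu' u hadj.symm
      have := hedge u u' hadj
      rw [h1, h2] at this
      simp [edgeMIS] at this
    · intro v hv
      simp only [Set.mem_setOf_eq, not_forall] at hv
      obtain ⟨w, hadj, hne⟩ := hv
      rcases hnode v with hcase | hcase
      · exact absurd (keyM v hcase w hadj) hne
      -- find a neighbor labeled P
      have hP : Lab3.P ∈ (G.neighborFinset v).val.map (ℓ v) := by
        rw [hcase]; exact Multiset.mem_cons_self _ _
      obtain ⟨w₀, hw₀mem, hw₀P⟩ := Multiset.mem_map.mp hP
      have hadj₀ : G.Adj v w₀ := by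
        rwa [← SimpleGraph.mem_neighborFinset]
        -- membership
      have hedge₀ := hedge v w₀ hadj₀
      rw [hw₀P] at hedge₀
      have hM : ℓ w₀ v = Lab3.M := by
        rcases hedge₀ with ⟨h, _⟩ | ⟨_, h⟩ | ⟨h, _⟩ <;> first | exact h | simp at h
      -- node constraint at w₀ must be all-M
      rcases hnode w₀ with hc | hc
      · exact ⟨w₀, keyM w₀ hc, hadj₀⟩
      · exfalso
        have : Lab3.M ∈ (G.neighborFinset w₀).val.map (ℓ w₀) :=
          Multiset.mem_map.mpr ⟨v, by simpa [SimpleGraph.mem_neighborFinset] using hadj₀.symm, hM⟩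
        rw [hc] at this
        rcases Multiset.mem_cons.mp this with h | h
        · simp at h
        · exact absurd (Multiset.eq_of_mem_replicate h) (by simp)
  · intro S hind hdom
    have hex : ∀ v : V, ∃ u : V, v ∉ S → u ∈ S ∧ G.Adj v u := by
      intro v
      by_cases h : v ∈ S
      · exact ⟨v, fun h' => absurd h h'⟩
      · obtain ⟨u, hu, ha⟩ := hdom v h
        exact ⟨u, fun _ => ⟨hu, ha⟩⟩
    choose f hf using hex
    refine ⟨fun u v => if u ∈ S then Lab3.M else if v = f u then Lab3.P else Lab3.O, ⟨?_, ?_⟩, ?_⟩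
    · intro v
      by_cases hv : v ∈ S
      · left
        rw [Multiset.eq_replicate]
        constructor
        · rw [Multiset.card_map]
          exact hreg v
        · intro b hb
          obtain ⟨w, _, hw⟩ := Multiset.mem_map.mp hb
          simp only [if_pos hv] at hw
          exact hw.symm
      · right
        obtain ⟨hfS, hfadj⟩ := hf v hv
        have hmem : f v ∈ (G.neighborFinset v).val := by
          simpa [SimpleGraph.mem_neighborFinset] using hfadj
        have hnd : ((G.neighborFinset v).val).Nodup := (G.neighborFinset v).nodup
        show Multiset.map (fun w => if v ∈ S then Lab3.M else if w = f v then Lab3.P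
          else Lab3.O) (G.neighborFinset v).val = _
        rw [← Multiset.cons_erase hmem, Multiset.map_cons, if_neg hv, if_pos rfl]
        congr 1
        rw [Multiset.eq_replicate]
        constructor
        · rw [Multiset.card_map, Multiset.card_erase_of_mem hmem]
          have hc : Multiset.card (G.neighborFinset v).val = Δ := hreg v
          rw [hc, Nat.pred_eq_sub_one]
        · intro b hb
          obtain ⟨w, hwmem, hw⟩ := Multiset.mem_map.mp hb
          have hwne : w ≠ f v := (hnd.mem_erase_iff.mp hwmem).1
          rw [if_neg hv, if_neg hwne] at hw
          exact hw.symm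
    · intro u v hadj
      by_cases hu : u ∈ S <;> by_cases hv : v ∈ S
      · exact absurd hadj (hind u hu v hv)
      · -- u ∈ S, v ∉ S
        have hne : u ≠ f v ∨ u = f v := (ne_or_eq _ _)
        left
        refine ⟨by simp [hu], ?_⟩
        by_cases h : u = f v
        · left; simp [hv, h]
        · right; simp [hv, h]
      · right; left
        constructor
        · by_cases h : v = f u
          · left; simp [hu, h]
          · right; simp [hu, h]
        · simp [hv]
      · right; right
        have h1 : v ≠ f u := fun h => hv (h ▸ (hf u hu).1)
        have h2 : u ≠ f v := fun h => hu (h ▸ (hf v hv).1)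
        constructor <;> simp [hu, hv, h1, h2]
    · ext v
      simp only [Set.mem_setOf_eq]
      constructor
      · intro h
        by_contra hv
        obtain ⟨hfS, hfadj⟩ := hf v hv
        have := h (f v) hfadj
        simp [hv] at this
      · intro hv w _
        simp [hv]
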